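/- Let n ≥ 2 be an integer, let r : (−T, T) → ℝ be a maximal n-catenoid profile function, let z₁(c) < 0 < z₂(c) denote the two solutions of z·r'(z − c) = r(z − c), and let f_i(c) = z_i(c)² + r(z_i(c) − c)². Then f₁'(0) > 0 and f₂'(0) < 0. -/

import Mathlib

open Set Filter Topology


/-- A maximal `n`-catenoid profile function: a twice differentiable positive function
`r` on the interval `(-T, T)` (where `0 < T ≤ ∞`, encoded via `T : EReal`) with
`r 0 = 1`, `r' 0 = 0`, satisfying the catenoid ODE `r·r'' − (n−1)(1 + r'²) = 0`,
and with `r z → ∞` as `z → ±T`. -/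
def IsMaxCatenoidProfile (n : ℕ) (T : EReal) (r : ℝ → ℝ) : Prop :=
  0 < T ∧
  (∀ z : ℝ, (z : EReal) ∈ Set.Ioo (-T) T → 0 < r z) ∧
  (∀ z : ℝ, (z : EReal) ∈ Set.Ioo (-T) T →
    DifferentiableAt ℝ r z ∧ DifferentiableAt ℝ (deriv r) z) ∧
  r 0 = 1 ∧ deriv r 0 = 0 ∧
  (∀ z : ℝ, (z : EReal) ∈ Set.Ioo (-T) T →
    r z * deriv (deriv r) z - ((n : ℝ) - 1) * (1 + (deriv r z) ^ 2) = 0) ∧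
  Filter.Tendsto r
    (Filter.comap (fun z : ℝ => (z : EReal)) (nhdsWithin T (Set.Iio T))) Filter.atTop ∧
  Filter.Tendsto r
    (Filter.comap (fun z : ℝ => (z : EReal)) (nhdsWithin (-T) (Set.Ioi (-T)))) Filter.atTop


theorem sqrt_bound (K : ℝ) (g : ℝ → ℝ) (b : ℝ) (hb : 0 ≤ b) (hg0 : g 0 = 1)
    (hcont : ContinuousOn g (Icc 0 b))
    (hgt : ∀ x ∈ Ioo 0 b, 1 < g x)
    (hderiv : ∀ x ∈ Ioo 0 b, ∃ g', HasDerivAt g g' x ∧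
      Real.sqrt K * Real.sqrt (g x - 1) ≤ g') :
    Real.sqrt K * b / 2 ≤ Real.sqrt (g b - 1) := by
  rcases eq_or_lt_of_le hb with hb0 | hbpos
  · subst hb0
    simp [hg0]
  set q : ℝ → ℝ := fun x => Real.sqrt (g x - 1) - Real.sqrt K * x / 2 with hq
  have hmono : MonotoneOn q (Icc 0 b) := by
    apply monotoneOn_of_deriv_nonneg (convex_Icc 0 b)
    · exact ((Real.continuous_sqrt.comp_continuousOn (hcont.sub continuousOn_const)).sub
        ((continuous_const.mul continuous_id).div_const 2).continuousOn)
    · intro x hx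
      rw [interior_Icc] at hx
      obtain ⟨g', hg', _⟩ := hderiv x hx
      have hgx : g x - 1 ≠ 0 := by have := hgt x hx; linarith
      exact (((hg'.sub_const 1).sqrt hgx).sub
        (((hasDerivAt_id x).const_mul (Real.sqrt K)).div_const 2)).differentiableAt.differentiableWithinAt
    · intro x hx
      rw [interior_Icc] at hx
      obtain ⟨g', hg', hge⟩ := hderiv x hx
      have hgx1 : 1 < g x := hgt x hx
      have hgx : g x - 1 ≠ 0 := by linarith
      have hs : 0 < Real.sqrt (g x - 1) := Real.sqrt_pos.2 (by linarith)
      have hd : HasDerivAt q (g' / (2 * Real.sqrt (g x - 1)) - Real.sqrt K / 2) x := by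
        have h1 := (hg'.sub_const 1).sqrt hgx
        have h2 : HasDerivAt (fun x : ℝ => Real.sqrt K * x / 2) (Real.sqrt K / 2) x := by
          simpa using ((hasDerivAt_id x).const_mul (Real.sqrt K)).div_const 2
        exact h1.sub h2
      rw [hd.deriv]
      have hK : 0 ≤ Real.sqrt K := Real.sqrt_nonneg K
      rw [sub_nonneg, div_le_div_iff₀ (by norm_num) (by positivity)]
      calc Real.sqrt K * (2 * Real.sqrt (g x - 1)) = (Real.sqrt K * Real.sqrt (g x - 1)) * 2 := by ring
        _ ≤ g' * 2 := by linarith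
  have h0m : (0:ℝ) ∈ Icc 0 b := ⟨le_refl 0, hb⟩
  have hbm : b ∈ Icc 0 b := ⟨hb, le_refl b⟩
  have := hmono h0m hbm hb
  simp only [hq, hg0] at this
  simp at this
  linarith [this]

theorem first_integral (n : ℕ) (hn : 2 ≤ n) (T : EReal) (r : ℝ → ℝ)
    (hD : IsOpen {z : ℝ | (z : EReal) ∈ Set.Ioo (-T) T})
    (hconv : Convex ℝ {z : ℝ | (z : EReal) ∈ Set.Ioo (-T) T})
    (h0 : (0:ℝ) ∈ {z : ℝ | (z : EReal) ∈ Set.Ioo (-T) T})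
    (hpos : ∀ z ∈ {z : ℝ | (z : EReal) ∈ Set.Ioo (-T) T}, 0 < r z)
    (hdiff : ∀ z ∈ {z : ℝ | (z : EReal) ∈ Set.Ioo (-T) T},
      DifferentiableAt ℝ r z ∧ DifferentiableAt ℝ (deriv r) z)
    (hr0 : r 0 = 1) (hr'0 : deriv r 0 = 0)
    (hode : ∀ z ∈ {z : ℝ | (z : EReal) ∈ Set.Ioo (-T) T},
      r z * deriv (deriv r) z - ((n : ℝ) - 1) * (1 + (deriv r z) ^ 2) = 0) :
    ∀ z ∈ {z : ℝ | (z : EReal) ∈ Set.Ioo (-T) T},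
      1 + (deriv r z) ^ 2 = (r z) ^ (2*n - 2) := by
  set D := {z : ℝ | (z : EReal) ∈ Set.Ioo (-T) T} with hDdef
  set F : ℝ → ℝ := fun z => (1 + (deriv r z) ^ 2) / (r z) ^ (2*n - 2) with hF
  have hFd : ∀ z ∈ D, HasDerivAt F 0 z := by
    intro z hz
    have h1 : HasDerivAt r (deriv r z) z := (hdiff z hz).1.hasDerivAt
    have h2 : HasDerivAt (deriv r) (deriv (deriv r) z) z := (hdiff z hz).2.hasDerivAt
    have hrz : r z ≠ 0 := (hpos z hz).ne'
    have hrpow : (r z) ^ (2*n-2) ≠ 0 := pow_ne_zero _ hrz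
    have hnum : HasDerivAt (fun z => 1 + (deriv r z) ^ 2)
        (2 * deriv r z * deriv (deriv r) z) z := by
      have := (h2.pow 2).const_add 1
      refine this.congr_deriv ?_
      ring
    have hden : HasDerivAt (fun z => (r z) ^ (2*n-2))
        ((2*n-2 : ℕ) * (r z) ^ (2*n - 3) * deriv r z) z := by
      have := h1.pow (2*n-2)
      refine this.congr_deriv ?_
      rw [show 2*n-2-1 = 2*n-3 by omega]
    have := hnum.div hden hrpow
    refine this.congr_deriv (Eq.symm ?_)
    have hodez := hode z hz
    have hpowsplit : (r z) ^ (2*n-2) = (r z) ^ (2*n-3) * r z := by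
      rw [← pow_succ]
      congr 1
      omega
    have hcast : ((2*n-2 : ℕ) : ℝ) = 2 * ((n:ℝ) - 1) := by
      push_cast [Nat.cast_sub (by omega : 2 ≤ 2*n)]
      ring
    rw [eq_comm, div_eq_zero_iff]
    left
    rw [hpowsplit, hcast]
    linear_combination (2 * deriv r z * r z ^ (2*n-3)) * hodez
  have hFconst : ∀ z ∈ D, F z = F 0 := by
    intro z hz
    have hFdiff : DifferentiableOn ℝ F D := fun x hx => ((hFd x hx).differentiableAt).differentiableWithinAt
    have : ∀ x ∈ D, fderivWithin ℝ F D x = 0 := by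
      intro x hx
      rw [fderivWithin_of_isOpen hD hx]
      have := (hFd x hx).hasFDerivAt.fderiv
      rw [this]
      ext
      simp
    exact hconv.is_const_of_fderivWithin_eq_zero hFdiff this hz h0
  intro z hz
  have hF0 : F 0 = 1 := by simp [hF, hr'0, hr0]
  have := hFconst z hz
  rw [hF0, hF] at this
  have hrpow : (r z) ^ (2*n-2) ≠ 0 := pow_ne_zero _ (hpos z hz).ne'
  field_simp at this
  linarith [this]

set_option maxHeartbeats 1000000 in
theorem branch (n : ℕ) (hn : 2 ≤ n) (T : EReal) (r : ℝ → ℝ)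
    (hr : IsMaxCatenoidProfile n T r)
    (w : ℝ) (hw : ((w:ℝ) : EReal) ∈ Set.Ioo (-T) T) (hw0 : w ≠ 0)
    (htan : w * deriv r w = r w) :
    ((n:ℝ) - 1) < (deriv r w)^2 ∧ ∃ φ : ℝ → ℝ, φ 0 = w ∧
      (∀ᶠ c in 𝓝 0, (((φ c : ℝ) : EReal) ∈ Set.Ioo (-T) T ∧
          (φ c + c) * deriv r (φ c) = r (φ c)) ∧
        ((0 < w → 0 < φ c + c) ∧ (w < 0 → φ c + c < 0))) ∧
      HasDerivAt (fun c => (φ c + c)^2 + (r (φ c))^2)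
        (2*w*(1 - (deriv r w)^2/((n:ℝ)-1))) 0 := by
  obtain ⟨hT, hpos, hdiff, hr0, hr'0, hode, -, -⟩ := hr
  set D := {z : ℝ | (z : EReal) ∈ Set.Ioo (-T) T} with hDdef
  have hD : IsOpen D := isOpen_Ioo.preimage continuous_coe_real_ereal
  have hconv : Convex ℝ D := by
    rw [convex_iff_ordConnected]
    constructor
    intro x hx y hy z hz
    exact ⟨lt_of_lt_of_le hx.1 (EReal.coe_le_coe_iff.2 hz.1),
      lt_of_le_of_lt (EReal.coe_le_coe_iff.2 hz.2) hy.2⟩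
  have h0 : (0:ℝ) ∈ D := by
    constructor
    · exact EReal.neg_lt_of_neg_lt (by simpa using hT)
    · simpa using hT
  have hfi := first_integral n hn T r hD hconv h0 hpos hdiff hr0 hr'0 hode
  have hwD : w ∈ D := hw
  -- second derivative formula and positivity
  have hn1 : (0:ℝ) < (n:ℝ) - 1 := by
    have : (2:ℝ) ≤ (n:ℝ) := by exact_mod_cast hn
    linarith
  have hr'' : ∀ z ∈ D, deriv (deriv r) z = ((n:ℝ) - 1) * (1 + (deriv r z)^2) / r z := by
    intro z hz
    have h := hode z hz
    have := (hpos z hz).ne'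
    field_simp
    linarith [h]
  have hr''pos : ∀ z ∈ D, 0 < deriv (deriv r) z := by
    intro z hz
    rw [hr'' z hz]
    have := hpos z hz
    positivity
  -- strict monotonicity of r'
  have hr'cont : ContinuousOn (deriv r) D := fun z hz => ((hdiff z hz).2.continuousAt).continuousWithinAt
  have hr'mono : StrictMonoOn (deriv r) D := by
    apply strictMonoOn_of_deriv_pos hconv hr'cont
    intro x hx
    rw [hD.interior_eq] at hx
    exact hr''pos x hx
  have hr'sign : ∀ z ∈ D, 0 < z → 0 < deriv r z := by
    intro z hz hzpos
    have := hr'mono h0 hz hzpos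
    rwa [hr'0] at this
  have hr'signneg : ∀ z ∈ D, z < 0 → deriv r z < 0 := by
    intro z hz hzneg
    have := hr'mono hz h0 hzneg
    rwa [hr'0] at this
  -- r > 1 away from 0 (on the segment between 0 and z)
  have hIccD : ∀ z ∈ D, 0 ≤ z → Icc 0 z ⊆ D := by
    intro z hz hz0
    have := hconv.ordConnected
    exact fun x hx => this.out h0 hz hx
  have hIccDneg : ∀ z ∈ D, z ≤ 0 → Icc z 0 ⊆ D := by
    intro z hz hz0
    have := hconv.ordConnected
    exact fun x hx => this.out hz h0 hx
  have hrcont : ContinuousOn r D := fun z hz => ((hdiff z hz).1.continuousAt).continuousWithinAt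
  -- r strictly increasing on [0,z] for z in D, z > 0; r > 1 there
  have hrgt1 : ∀ z ∈ D, z ≠ 0 → 1 < r z := by
    intro z hz hz0
    rcases lt_or_gt_of_ne hz0 with hzneg | hzpos
    · have hsub := hIccDneg z hz hzneg.le
      have : StrictAntiOn r (Icc z 0) := by
        apply strictAntiOn_of_deriv_neg (convex_Icc z 0) (hrcont.mono hsub)
        intro x hx
        rw [interior_Icc] at hx
        exact hr'signneg x (hsub ⟨hx.1.le, hx.2.le⟩) hx.2
      have := this ⟨le_refl z, hzneg.le⟩ ⟨hzneg.le, le_refl 0⟩ hzneg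
      rwa [hr0] at this
    · have hsub := hIccD z hz hzpos.le
      have : StrictMonoOn r (Icc 0 z) := by
        apply strictMonoOn_of_deriv_pos (convex_Icc 0 z) (hrcont.mono hsub)
        intro x hx
        rw [interior_Icc] at hx
        exact hr'sign x (hsub ⟨hx.1.le, hx.2.le⟩) hx.1
      have := this ⟨le_refl 0, hzpos.le⟩ ⟨hzpos.le, le_refl z⟩ hzpos
      rwa [hr0] at this
  -- lower bound on |deriv r| from first integral
  have hderlb : ∀ z ∈ D, z ≠ 0 →
      Real.sqrt (2*(n:ℝ) - 2) * Real.sqrt (r z - 1) ≤ |deriv r z| := by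
    intro z hz hz0
    have hfiz := hfi z hz
    have hr1 : 1 < r z := hrgt1 z hz hz0
    -- Bernoulli: (r z)^(2n-2) ≥ 1 + (2n-2)(r z - 1)
    have hbern : 1 + (2*(n:ℝ) - 2) * (r z - 1) ≤ (r z) ^ (2*n - 2) := by
      have h := one_add_mul_le_pow (a := r z - 1) (by linarith) (2*n - 2)
      have hc : ((2*n - 2 : ℕ) : ℝ) = 2*(n:ℝ) - 2 := by
        push_cast [Nat.cast_sub (by omega : 2 ≤ 2*n)]
        ring
      calc 1 + (2*(n:ℝ)-2) * (r z - 1) = 1 + ((2*n-2 : ℕ):ℝ) * (r z - 1) := by rw [hc]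
        _ ≤ (1 + (r z - 1)) ^ (2*n-2) := h
        _ = (r z) ^ (2*n-2) := by ring_nf
    have hsq : (2*(n:ℝ) - 2) * (r z - 1) ≤ (deriv r z)^2 := by
      have : (deriv r z)^2 = (r z)^(2*n-2) - 1 := by linarith [hfiz]
      rw [this]; linarith
    have h1 : Real.sqrt ((2*(n:ℝ)-2) * (r z - 1)) ≤ Real.sqrt ((deriv r z)^2) :=
      Real.sqrt_le_sqrt hsq
    rwa [Real.sqrt_mul (by linarith) , Real.sqrt_sq_eq_abs] at h1
  -- key inequality
  set p := deriv r w with hp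
  set u := r w with hu
  clear_value p u
  have hupos : 0 < u := hu ▸ hpos w hw
  have hu1 : 1 < u := hu ▸ hrgt1 w hw hw0
  have hp0 : p ≠ 0 := by
    intro h
    rw [h, mul_zero] at htan
    linarith [htan, hupos]
  have hK0 : (0:ℝ) ≤ 2*(n:ℝ) - 2 := by linarith
  have hk2 : (Real.sqrt (2*(n:ℝ)-2))^2 = 2*(n:ℝ)-2 := Real.sq_sqrt hK0
  have hs2 : (Real.sqrt (u-1))^2 = u - 1 := Real.sq_sqrt (by linarith)
  have hk0 : 0 ≤ Real.sqrt (2*(n:ℝ)-2) := Real.sqrt_nonneg _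
  have hs0 : 0 ≤ Real.sqrt (u-1) := Real.sqrt_nonneg _
  have hkey : ((n:ℝ) - 1) < p^2 := by
    by_contra hcon
    push_neg at hcon
    rcases lt_or_gt_of_ne hw0 with hwneg | hwpos
    · -- w < 0 case: use g = r ∘ neg on [0, -w]
      have hpneg : p < 0 := hp ▸ hr'signneg w hw hwneg
      have hmaps : ∀ x ∈ Icc 0 (-w), -x ∈ Icc w 0 := by
        intro x hx
        constructor <;> [linarith [hx.2]; linarith [hx.1]]
      have hsb := sqrt_bound (2*(n:ℝ)-2) (fun x => r (-x)) (-w) (by linarith)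
        (by simp [hr0])
        (by
          apply ContinuousOn.comp (hrcont.mono (hIccDneg w hw hwneg.le)) continuous_neg.continuousOn
          intro x hx
          exact hmaps x ⟨hx.1, hx.2⟩)
        (by
          intro x hx
          have hmem : -x ∈ Icc w 0 := hmaps x ⟨hx.1.le, hx.2.le⟩
          have hmD : -x ∈ D := hIccDneg w hw hwneg.le hmem
          exact hrgt1 (-x) hmD (by intro h; simp at h; exact absurd h (ne_of_gt hx.1)))
        (by
          intro x hx
          have hmem : -x ∈ Icc w 0 := hmaps x ⟨hx.1.le, hx.2.le⟩
          have hmD : -x ∈ D := hIccDneg w hw hwneg.le hmem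
          have hxne : -x ≠ 0 := by intro h; simp at h; exact absurd h (ne_of_gt hx.1)
          have hd : HasDerivAt (fun y => r (-y)) (-(deriv r (-x))) x := by
            have := ((hdiff (-x) hmD).1.hasDerivAt).comp x (hasDerivAt_neg x)
            exact this.congr_deriv (by ring)
          refine ⟨-(deriv r (-x)), hd, ?_⟩
          have := hderlb (-x) hmD hxne
          have habs : |deriv r (-x)| = -(deriv r (-x)) := by
            rw [abs_of_neg]
            exact hr'signneg (-x) hmD (by linarith [hx.1])
          rw [habs] at this
          exact this)
      simp only [neg_neg] at hsb
      rw [← hu] at hsb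
      -- hsb : √(2n-2) * (-w) / 2 ≤ √(u - 1)
      have hw_eq : (-w) * (-p) = u := by nlinarith [htan]
      have hpn : 0 < -p := by linarith
      have h1 : Real.sqrt (2*(n:ℝ)-2) * u ≤ 2 * (Real.sqrt (u-1) * (-p)) := by
        nlinarith [mul_le_mul_of_nonneg_right (by linarith [hsb] : Real.sqrt (2*(n:ℝ)-2) * (-w) ≤ 2 * Real.sqrt (u-1)) hpn.le]
      have h2 : (Real.sqrt (2*(n:ℝ)-2) * u)^2 ≤ (2 * (Real.sqrt (u-1) * (-p)))^2 := by
        apply pow_le_pow_left₀ (by positivity) h1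
      have e2 : (2*(n:ℝ)-2) * u^2 ≤ 4 * ((u-1) * (-p)^2) := by
        rw [mul_pow, mul_pow, mul_pow, hk2, hs2] at h2
        norm_num at h2
        nlinarith [h2]
      have e3 : (u-1) * (-p)^2 ≤ (u-1)*((n:ℝ)-1) := by
        apply mul_le_mul_of_nonneg_left _ (by linarith : (0:ℝ) ≤ u - 1)
        nlinarith [hcon]
      nlinarith [e2, e3, mul_pos hn1 (by positivity : (0:ℝ) < (u-1)^2+1)]
    · -- w > 0 case
      have hppos : 0 < p := hp ▸ hr'sign w hw hwpos
      have hsb := sqrt_bound (2*(n:ℝ)-2) r w hwpos.le hr0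
        (hrcont.mono (hIccD w hw hwpos.le))
        (by
          intro x hx
          have hmD : x ∈ D := hIccD w hw hwpos.le ⟨hx.1.le, hx.2.le⟩
          exact hrgt1 x hmD (ne_of_gt hx.1))
        (by
          intro x hx
          have hmD : x ∈ D := hIccD w hw hwpos.le ⟨hx.1.le, hx.2.le⟩
          refine ⟨deriv r x, (hdiff x hmD).1.hasDerivAt, ?_⟩
          have := hderlb x hmD (ne_of_gt hx.1)
          have habs : |deriv r x| = deriv r x := abs_of_pos (hr'sign x hmD hx.1)
          rwa [habs] at this)
      have hw_eq : w * p = u := htan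
      rw [← hu] at hsb
      have h1 : Real.sqrt (2*(n:ℝ)-2) * u ≤ 2 * (Real.sqrt (u-1) * p) := by
        nlinarith [mul_le_mul_of_nonneg_right (by linarith [hsb] : Real.sqrt (2*(n:ℝ)-2) * w ≤ 2 * Real.sqrt (u-1)) hppos.le]
      have h2 : (Real.sqrt (2*(n:ℝ)-2) * u)^2 ≤ (2 * (Real.sqrt (u-1) * p))^2 := by
        apply pow_le_pow_left₀ (by positivity) h1
      have e2 : (2*(n:ℝ)-2) * u^2 ≤ 4 * ((u-1) * p^2) := by
        rw [mul_pow, mul_pow, mul_pow, hk2, hs2] at h2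
        norm_num at h2
        nlinarith [h2]
      have e3 : (u-1) * p^2 ≤ (u-1)*((n:ℝ)-1) := by
        apply mul_le_mul_of_nonneg_left _ (by linarith : (0:ℝ) ≤ u - 1)
        nlinarith [hcon]
      nlinarith [e2, e3, mul_pos hn1 (by positivity : (0:ℝ) < (u-1)^2+1)]
  refine ⟨hkey, ?_⟩
  -- C¹ regularity
  have hr''cont : ContinuousOn (deriv (deriv r)) D := by
    have hform : ContinuousOn (fun z => ((n:ℝ)-1) * (1 + (deriv r z)^2) / r z) D :=
      (continuousOn_const.mul (continuousOn_const.add (hr'cont.pow 2))).div hrcont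
        (fun z hz => (hpos z hz).ne')
    exact hform.congr (fun z hz => hr'' z hz)
  have hC1r : ContDiffOn ℝ 1 r D := by
    have h := (contDiffOn_succ_iff_deriv_of_isOpen (n := 0) (f := r) (s := D) hD)
    rw [zero_add] at h
    exact h.2 ⟨fun x hx => ((hdiff x hx).1).differentiableWithinAt,
      by intro hh; exact absurd hh (by simp), contDiffOn_zero.2 hr'cont⟩
  have hC1r' : ContDiffOn ℝ 1 (deriv r) D := by
    have h := (contDiffOn_succ_iff_deriv_of_isOpen (n := 0) (f := deriv r) (s := D) hD)
    rw [zero_add] at h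
    exact h.2 ⟨fun x hx => ((hdiff x hx).2).differentiableWithinAt,
      by intro hh; exact absurd hh (by simp), contDiffOn_zero.2 hr''cont⟩
  have hwD' : D ∈ 𝓝 w := hD.mem_nhds hwD
  have hp0' : deriv r w ≠ 0 := by rw [← hp]; exact hp0
  set H : ℝ → ℝ := fun x => r x / deriv r x - x with hHdef
  have hHC : ContDiffAt ℝ 1 H w :=
    ((hC1r.contDiffAt hwD').div (hC1r'.contDiffAt hwD') hp0').sub contDiffAt_id
  set A : ℝ := -(((n:ℝ)-1) * (1+p^2)/p^2) with hAdef
  have hp2 : (0:ℝ) < p^2 := by positivity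
  have hAneg : A < 0 := by
    rw [hAdef]
    have : 0 < ((n:ℝ)-1) * (1+p^2)/p^2 := by positivity
    linarith
  have hA0 : A ≠ 0 := ne_of_lt hAneg
  have hHd : HasDerivAt H A w := by
    have h1 : HasDerivAt r (deriv r w) w := (hdiff w hwD).1.hasDerivAt
    have h2 : HasDerivAt (deriv r) (deriv (deriv r) w) w := (hdiff w hwD).2.hasDerivAt
    have h3 := (h1.div h2 hp0').sub (hasDerivAt_id w)
    refine h3.congr_deriv (Eq.symm ?_)
    rw [hr'' w hwD, ← hp, ← hu, hAdef]
    have hune : u ≠ 0 := hupos.ne'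
    field_simp
    ring
  have hHs : HasStrictDerivAt H A w := by
    have h := hHC.hasStrictDerivAt one_ne_zero
    rwa [hHd.deriv] at h
  have hHw0 : H w = 0 := by
    have hh : H w = r w / deriv r w - w := rfl
    rw [hh, ← hp, ← hu, sub_eq_zero, div_eq_iff hp0]
    linarith [htan]
  have hF := hHs.hasStrictFDerivAt_equiv hA0
  set φ : ℝ → ℝ := hHs.localInverse H A w hA0 with hφdef
  have hφ0 : φ 0 = w := by
    have := hF.localInverse_apply_image
    rwa [hHw0] at this
  have hder : HasStrictDerivAt φ A⁻¹ 0 := by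
    have h := hHs.to_localInverse (hf' := hA0)
    rwa [hHw0] at h
  have hcontφ : ContinuousAt φ 0 := by
    have := hF.localInverse_continuousAt
    rwa [hHw0] at this
  have hrinv : ∀ᶠ c in 𝓝 0, H (φ c) = c := by
    have := hF.eventually_right_inverse
    rwa [hHw0] at this
  have htend : Tendsto φ (𝓝 0) (𝓝 w) := by
    have := hcontφ.tendsto
    rwa [hφ0] at this
  have hevD : ∀ᶠ c in 𝓝 0, φ c ∈ D := htend (hD.mem_nhds hwD)
  have hevne : ∀ᶠ c in 𝓝 0, deriv r (φ c) ≠ 0 := by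
    have ht : Tendsto (fun c => deriv r (φ c)) (𝓝 0) (𝓝 (deriv r w)) :=
      ((hdiff w hwD).2.continuousAt.tendsto).comp htend
    exact ht (isOpen_compl_singleton.mem_nhds hp0')
  have htend2 : Tendsto (fun c => φ c + c) (𝓝 0) (𝓝 w) := by
    have := htend.add tendsto_id
    simpa using this
  have hevsign : ∀ᶠ c in 𝓝 0, (0 < w → 0 < φ c + c) ∧ (w < 0 → φ c + c < 0) := by
    rcases lt_or_gt_of_ne hw0 with hwn | hwp
    · have hmem := htend2 (isOpen_Iio.mem_nhds (show w ∈ Iio (0:ℝ) from hwn))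
      filter_upwards [hmem] with c hc
      exact ⟨fun h => absurd hwn (not_lt.2 h.le), fun _ => hc⟩
    · have hmem := htend2 (isOpen_Ioi.mem_nhds (show w ∈ Ioi (0:ℝ) from hwp))
      filter_upwards [hmem] with c hc
      exact ⟨fun _ => hc, fun h => absurd hwp (not_lt.2 h.le)⟩
  have hevtan : ∀ᶠ c in 𝓝 0, (φ c + c) * deriv r (φ c) = r (φ c) := by
    filter_upwards [hrinv, hevne] with c h1 h2
    have hh : H (φ c) = r (φ c) / deriv r (φ c) - φ c := rfl
    rw [hh] at h1
    have hdiv : r (φ c) / deriv r (φ c) = φ c + c := by linarith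
    rw [div_eq_iff h2] at hdiv
    linarith [hdiv]
  have hgder : HasDerivAt (fun c => (φ c + c)^2 + (r (φ c))^2)
      (2*w*(1 - p^2/((n:ℝ)-1))) 0 := by
    have hφd : HasDerivAt φ A⁻¹ 0 := hder.hasDerivAt
    have h1 : HasDerivAt (fun c => φ c + c) (A⁻¹ + 1) 0 := hφd.add (hasDerivAt_id 0)
    have hrd : HasDerivAt r (deriv r w) (φ 0) := by
      rw [hφ0]; exact (hdiff w hwD).1.hasDerivAt
    have h2 : HasDerivAt (fun c => r (φ c)) (deriv r w * A⁻¹) 0 := hrd.comp 0 hφd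
    have h3 := (h1.pow 2).add (h2.pow 2)
    refine h3.congr_deriv (Eq.symm ?_)
    rw [hφ0, ← hp, ← hu]
    have hn1' : ((n:ℝ)-1) ≠ 0 := hn1.ne'
    have h1p : (1:ℝ) + p^2 ≠ 0 := by positivity
    rw [hAdef]
    field_simp
    linear_combination (-(2*p^3)) * htan
  exact ⟨φ, hφ0, by
    filter_upwards [hevD, hevtan, hevsign] with c h1 h2 h3
    exact ⟨⟨h1, h2⟩, h3⟩, hgder⟩

/-- With `z₁(c) < 0 < z₂(c)` the two radial-tangency points and
`f_i(c) = z_i(c)² + r(z_i(c) − c)²`, one has `f₁'(0) > 0` and `f₂'(0) < 0`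
(one-sided derivatives at `0`). -/
theorem squared_radius_derivative_signs_at_zero (n : ℕ) (hn : 2 ≤ n)
    (T : EReal) (r : ℝ → ℝ) (hr : IsMaxCatenoidProfile n T r)
    (z₁ z₂ : ℝ → ℝ)
    (hdom₁ : ∀ c : ℝ, 0 ≤ c → ((z₁ c - c : ℝ) : EReal) ∈ Set.Ioo (-T) T)
    (hdom₂ : ∀ c : ℝ, 0 ≤ c → ((z₂ c - c : ℝ) : EReal) ∈ Set.Ioo (-T) T)
    (hneg : ∀ c : ℝ, 0 ≤ c → z₁ c < 0)
    (hpos : ∀ c : ℝ, 0 ≤ c → 0 < z₂ c)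
    (heq₁ : ∀ c : ℝ, 0 ≤ c → z₁ c * deriv r (z₁ c - c) = r (z₁ c - c))
    (heq₂ : ∀ c : ℝ, 0 ≤ c → z₂ c * deriv r (z₂ c - c) = r (z₂ c - c))
    (huniq : ∀ c : ℝ, 0 ≤ c → ∀ z : ℝ, ((z - c : ℝ) : EReal) ∈ Set.Ioo (-T) T →
      z * deriv r (z - c) = r (z - c) → z = z₁ c ∨ z = z₂ c)
    (f₁ f₂ : ℝ → ℝ)
    (hf₁ : f₁ = fun c => (z₁ c) ^ 2 + (r (z₁ c - c)) ^ 2)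
    (hf₂ : f₂ = fun c => (z₂ c) ^ 2 + (r (z₂ c - c)) ^ 2) :
    0 < derivWithin f₁ (Set.Ici 0) 0 ∧ derivWithin f₂ (Set.Ici 0) 0 < 0 := by
  have hn1 : (0:ℝ) < (n:ℝ) - 1 := by
    have : (2:ℝ) ≤ (n:ℝ) := by exact_mod_cast hn
    linarith
  constructor
  · -- f₁
    have hd := hdom₁ 0 le_rfl
    rw [sub_zero] at hd
    have he := heq₁ 0 le_rfl
    rw [sub_zero] at he
    have hwneg := hneg 0 le_rfl
    obtain ⟨hkey, φ, hφ0, hev, hgder⟩ := branch n hn T r hr (z₁ 0) hd (ne_of_lt hwneg) he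
    have hev' : ∀ᶠ c in 𝓝[Set.Ici (0:ℝ)] 0, f₁ c = (φ c + c)^2 + (r (φ c))^2 := by
      filter_upwards [hev.filter_mono nhdsWithin_le_nhds, eventually_mem_nhdsWithin]
        with c hc hc0
      obtain ⟨⟨hcD, hctan⟩, hsign⟩ := hc
      have hzc : φ c + c = z₁ c := by
        have hdm : (((φ c + c) - c : ℝ) : EReal) ∈ Set.Ioo (-T) T := by
          simpa using hcD
        have hun := huniq c hc0 (φ c + c) hdm (by simpa using hctan)
        rcases hun with h | h
        · exact h
        · exfalso
          have h1 := hsign.2 hwneg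
          have h2 := hpos c hc0
          rw [h] at h1
          linarith
      have hsub : z₁ c - c = φ c := by rw [← hzc]; ring
      rw [hf₁]
      simp only
      rw [← hzc, add_sub_cancel_right]
    have heq0 : f₁ 0 = (φ 0 + 0)^2 + (r (φ 0))^2 := by
      rw [hf₁]
      simp [hφ0]
    rw [Filter.EventuallyEq.derivWithin_eq hev' heq0]
    have hdw : derivWithin (fun c => (φ c + c)^2 + (r (φ c))^2) (Set.Ici 0) 0
        = 2*(z₁ 0)*(1 - (deriv r (z₁ 0))^2/((n:ℝ)-1)) :=
      (hgder.hasDerivWithinAt).derivWithin (uniqueDiffOn_Ici 0 0 Set.self_mem_Ici)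
    rw [hdw]
    have hfac : 1 - (deriv r (z₁ 0))^2/((n:ℝ)-1) < 0 := by
      rw [sub_lt_zero, lt_div_iff₀ hn1]
      linarith [hkey]
    nlinarith [mul_pos_of_neg_of_neg hwneg hfac]
  · -- f₂
    have hd := hdom₂ 0 le_rfl
    rw [sub_zero] at hd
    have he := heq₂ 0 le_rfl
    rw [sub_zero] at he
    have hwpos := hpos 0 le_rfl
    obtain ⟨hkey, φ, hφ0, hev, hgder⟩ := branch n hn T r hr (z₂ 0) hd (ne_of_gt hwpos) he
    have hev' : ∀ᶠ c in 𝓝[Set.Ici (0:ℝ)] 0, f₂ c = (φ c + c)^2 + (r (φ c))^2 := by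
      filter_upwards [hev.filter_mono nhdsWithin_le_nhds, eventually_mem_nhdsWithin]
        with c hc hc0
      obtain ⟨⟨hcD, hctan⟩, hsign⟩ := hc
      have hzc : φ c + c = z₂ c := by
        have hdm : (((φ c + c) - c : ℝ) : EReal) ∈ Set.Ioo (-T) T := by
          simpa using hcD
        have hun := huniq c hc0 (φ c + c) hdm (by simpa using hctan)
        rcases hun with h | h
        · exfalso
          have h1 := hsign.1 hwpos
          have h2 := hneg c hc0
          rw [h] at h1
          linarith
        · exact h
      have hsub : z₂ c - c = φ c := by rw [← hzc]; ring
      rw [hf₂]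
      simp only
      rw [← hzc, add_sub_cancel_right]
    have heq0 : f₂ 0 = (φ 0 + 0)^2 + (r (φ 0))^2 := by
      rw [hf₂]
      simp [hφ0]
    rw [Filter.EventuallyEq.derivWithin_eq hev' heq0]
    have hdw : derivWithin (fun c => (φ c + c)^2 + (r (φ c))^2) (Set.Ici 0) 0
        = 2*(z₂ 0)*(1 - (deriv r (z₂ 0))^2/((n:ℝ)-1)) :=
      (hgder.hasDerivWithinAt).derivWithin (uniqueDiffOn_Ici 0 0 Set.self_mem_Ici)
    rw [hdw]
    have hfac : 1 - (deriv r (z₂ 0))^2/((n:ℝ)-1) < 0 := by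
      rw [sub_lt_zero, lt_div_iff₀ hn1]
      linarith [hkey]
    nlinarith [mul_neg_of_pos_of_neg hwpos hfac]
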